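/- In the feed-forward recognition network with 0/1 weights and threshold τ = r·k, if B ⊆ C_0 is presented at time t, then for any concept c, rep(c) fires at time t + level(c) if and only if c ∈ supp_r(B). -/
import Mathlib


open scoped Classical
noncomputable section

/-- A concept hierarchy: concepts at levels `0..L`, each concept at level `≥ 1`
has exactly `k` children one level below, level-0 concepts have no children,
there are exactly `k` top-level concepts, and every non-top concept has a parent. -/
structure ConceptHierarchy (α : Type) [DecidableEq α] where
  L : ℕ
  k : ℕ
  concepts : Finset α
  level : α → ℕ
  children : α → Finset α
  level_le : ∀ c ∈ concepts, level c ≤ L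
  children_mem : ∀ c ∈ concepts, ∀ c' ∈ children c, c' ∈ concepts
  children_level : ∀ c ∈ concepts, ∀ c' ∈ children c, level c' + 1 = level c
  children_card : ∀ c ∈ concepts, 1 ≤ level c → (children c).card = k
  children_leaf : ∀ c ∈ concepts, level c = 0 → children c = ∅
  top_card : (concepts.filter (fun c => level c = L)).card = k
  has_parent : ∀ c ∈ concepts, level c < L → ∃ c' ∈ concepts, c ∈ children c'

namespace ConceptHierarchy

variable {α : Type} [DecidableEq α]

/-- The parents of a concept. -/
def parents (H : ConceptHierarchy α) (c : α) : Finset α :=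
  H.concepts.filter (fun c' => c ∈ H.children c')

/-- Limited overlap: each concept at level `≥ 1` shares at most `o·k` children
with the union of the other concepts at the same level. -/
def LimitedOverlap (H : ConceptHierarchy α) (o : ℝ) : Prop :=
  ∀ c ∈ H.concepts, 1 ≤ H.level c →
    (((H.children c).filter (fun d => ∃ c' ∈ H.concepts, c' ≠ c ∧
        H.level c' = H.level c ∧ d ∈ H.children c')).card : ℝ) ≤ o * H.k

/-- Tree hierarchy: no overlap among child sets of distinct same-level concepts. -/
def IsTree (H : ConceptHierarchy α) : Prop :=
  ∀ c ∈ H.concepts, ∀ c' ∈ H.concepts, H.level c = H.level c' → c ≠ c' →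
    Disjoint (H.children c) (H.children c')

/-- Descendant relation: reflexive-transitive closure of the children relation. -/
inductive Desc (H : ConceptHierarchy α) : α → α → Prop
  | refl (c : α) : Desc H c c
  | step {c d e : α} : d ∈ H.children c → Desc H d e → Desc H c e

/-- The level-0 descendants of a concept. -/
def leaves (H : ConceptHierarchy α) (c : α) : Finset α :=
  H.concepts.filter (fun d => H.Desc c d ∧ H.level d = 0)

/-- Level-indexed bottom-up support sets: `S(0) = B ∩ C₀`,
`S(ℓ) = {c at level ℓ : |children(c) ∩ S(ℓ-1)| ≥ r·k}`. -/
def suppL (H : ConceptHierarchy α) (r : ℝ) (B : Finset α) : ℕ → Finset α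
  | 0 => B ∩ H.concepts.filter (fun c => H.level c = 0)
  | (ℓ+1) => H.concepts.filter (fun c => H.level c = ℓ + 1 ∧
      r * H.k ≤ ((H.children c ∩ suppL H r B ℓ).card : ℝ))

/-- `supp_r(B) = ⋃_ℓ S(ℓ)`. -/
def supp (H : ConceptHierarchy α) (r : ℝ) (B : Finset α) : Set α :=
  ⋃ ℓ, ↑(H.suppL r B ℓ)

/-- Time-and-level-indexed support sets with feedback strength `f`:
`S(0,t) = B`; `S(ℓ,0) = ∅` for `ℓ ≥ 1`; and
`S(ℓ,t) = S(ℓ,t-1) ∪ {c at level ℓ : |children(c) ∩ S(ℓ-1,t-1)| + f·|parents(c) ∩ S(ℓ+1,t-1)| ≥ r·k}`. -/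
def suppFB (H : ConceptHierarchy α) (r f : ℝ) (B : Finset α) : ℕ → ℕ → Finset α
  | 0, _ => B
  | (_+1), 0 => ∅
  | (ℓ+1), (t+1) => suppFB H r f B (ℓ+1) t ∪
      H.concepts.filter (fun c => H.level c = ℓ + 1 ∧
        r * H.k ≤ ((H.children c ∩ suppFB H r f B ℓ t).card : ℝ) +
          f * ((H.parents c ∩ suppFB H r f B (ℓ+2) t).card : ℝ))
  termination_by ℓ t => t

/-- `supp_{r,f}(B,*,t) = ⋃_ℓ S(ℓ,t)`. -/
def suppFBatTime (H : ConceptHierarchy α) (r f : ℝ) (B : Finset α) (t : ℕ) : Set α :=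
  ⋃ ℓ, ↑(H.suppFB r f B ℓ t)

/-- `supp_{r,f}(B) = ⋃_{ℓ,t} S(ℓ,t)`. -/
def suppFBSet (H : ConceptHierarchy α) (r f : ℝ) (B : Finset α) : Set α :=
  ⋃ t, H.suppFBatTime r f B t

end ConceptHierarchy

/-- Feed-forward 0/1 weights: weight 1 from the rep of a child to the rep of its
parent, weight 0 otherwise. -/
def ffWeight {α ν : Type} [DecidableEq α] (H : ConceptHierarchy α) (rep : α → ν)
    (u v : ν) : ℝ :=
  if ∃ c ∈ H.concepts, ∃ c' ∈ H.children c, u = rep c' ∧ v = rep c then 1 else 0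

/-- Feedback-network weights: weight 1 upward (rep of child to rep of parent),
weight `f` downward (rep of parent to rep of child), 0 otherwise. -/
def fbWeight {α ν : Type} [DecidableEq α] (H : ConceptHierarchy α) (rep : α → ν)
    (f : ℝ) (u v : ν) : ℝ :=
  if ∃ c ∈ H.concepts, ∃ c' ∈ H.children c, u = rep c' ∧ v = rep c then 1
  else if ∃ c ∈ H.concepts, ∃ c' ∈ H.children c, u = rep c ∧ v = rep c' then f
  else 0

/-- in the feed-forward network with 0/1 weights and threshold `τ = r·k`,
if `B` is presented at time `t`, then `rep(c)` fires at time `t + level(c)`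
iff `c ∈ supp_r(B)`. -/
theorem ff_fires_iff_supported {α ν : Type} [DecidableEq α] [DecidableEq ν] [Fintype ν]
    (H : ConceptHierarchy α) (rep : α → ν) (layer : ν → ℕ)
    (hrep_inj : ∀ c ∈ H.concepts, ∀ c' ∈ H.concepts, rep c = rep c' → c = c')
    (hrep_layer : ∀ c ∈ H.concepts, layer (rep c) = H.level c)
    (r : ℝ) (firing : ν → ℕ → Prop) (B : Finset α)
    (hB : ∀ b ∈ B, b ∈ H.concepts ∧ H.level b = 0) (t : ℕ)
    (hpres : ∀ u : ν, layer u = 0 → (firing u t ↔ ∃ b ∈ B, u = rep b))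
    (hdyn : ∀ u : ν, 1 ≤ layer u → ∀ s : ℕ, (firing u (s + 1) ↔
        r * H.k ≤ ∑ v ∈ Finset.univ.filter (fun v => layer v + 1 = layer u ∧ firing v s),
          ffWeight H rep v u)) :
    ∀ c ∈ H.concepts, (firing (rep c) (t + H.level c) ↔ c ∈ H.supp r B) := by
  classical
  have hsuppL_level : ∀ ℓ, ∀ x ∈ H.suppL r B ℓ, x ∈ H.concepts ∧ H.level x = ℓ := by
    intro ℓ x hx
    cases ℓ with
    | zero =>
      simp [ConceptHierarchy.suppL] at hx
      exact ⟨hx.2.1, hx.2.2⟩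
    | succ ℓ =>
      simp [ConceptHierarchy.suppL] at hx
      exact ⟨hx.1, hx.2.1⟩
  have main : ∀ ℓ, ∀ c ∈ H.concepts, H.level c = ℓ →
      (firing (rep c) (t + ℓ) ↔ c ∈ H.suppL r B ℓ) := by
    intro ℓ
    induction ℓ with
    | zero =>
      intro c hc hlev
      rw [Nat.add_zero, hpres (rep c) (by rw [hrep_layer c hc, hlev])]
      simp only [ConceptHierarchy.suppL, Finset.mem_inter, Finset.mem_filter]
      constructor
      · rintro ⟨b, hb, hbr⟩
        have := hrep_inj c hc b (hB b hb).1 hbr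
        subst this
        exact ⟨hb, hc, hlev⟩
      · rintro ⟨hbB, _, _⟩
        exact ⟨c, hbB, rfl⟩
    | succ ℓ ih =>
      intro c hc hlev
      have hlayer : layer (rep c) = ℓ + 1 := by rw [hrep_layer c hc, hlev]
      rw [show t + (ℓ+1) = (t + ℓ) + 1 from rfl, hdyn (rep c) (by omega) (t + ℓ)]
      obtain ⟨s, hs⟩ : ∃ s, t + ℓ = s := ⟨_, rfl⟩
      rw [hs] at ih ⊢
      have hsum : ∑ v ∈ Finset.univ.filter (fun v => layer v + 1 = layer (rep c) ∧ firing v s),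
          ffWeight H rep v (rep c)
          = ((H.children c ∩ H.suppL r B ℓ).card : ℝ) := by
        have hterm1 : ∀ v, (∃ c₀ ∈ H.concepts, ∃ c' ∈ H.children c₀,
            v = rep c' ∧ rep c = rep c₀) → ffWeight H rep v (rep c) = 1 := by
          intro v hv
          unfold ffWeight
          exact if_pos hv
        have hterm0 : ∀ v, ¬ (∃ c₀ ∈ H.concepts, ∃ c' ∈ H.children c₀,
            v = rep c' ∧ rep c = rep c₀) → ffWeight H rep v (rep c) = 0 := by
          intro v hv
          unfold ffWeight
          exact if_neg hv
        rw [← Finset.sum_filter_add_sum_filter_not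
            (Finset.univ.filter (fun v => layer v + 1 = layer (rep c) ∧ firing v s))
            (fun v => ∃ c₀ ∈ H.concepts, ∃ c' ∈ H.children c₀, v = rep c' ∧ rep c = rep c₀)
            (fun v => ffWeight H rep v (rep c)),
          Finset.sum_congr rfl (fun v hv => hterm1 v (Finset.mem_filter.mp hv).2),
          Finset.sum_congr rfl (fun v hv => hterm0 v (Finset.mem_filter.mp hv).2),
          Finset.sum_const, Finset.sum_const_zero, add_zero, nsmul_eq_mul, mul_one]
        congr 1
        rw [Finset.filter_filter]
        have hset : Finset.univ.filter (fun v => (layer v + 1 = layer (rep c) ∧ firing v s) ∧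
            ∃ c₀ ∈ H.concepts, ∃ c' ∈ H.children c₀, v = rep c' ∧ rep c = rep c₀)
            = (H.children c ∩ H.suppL r B ℓ).image rep := by
          ext v
          simp only [Finset.mem_filter, Finset.mem_univ, true_and, Finset.mem_image,
            Finset.mem_inter]
          constructor
          · rintro ⟨⟨hl, hf⟩, c₀, hc₀, c', hc', rfl, hcc₀⟩
            have heq := hrep_inj c hc c₀ hc₀ hcc₀
            subst heq
            have hc'm : c' ∈ H.concepts := H.children_mem c hc c' hc'
            have hc'lev : H.level c' = ℓ := by
              have := H.children_level c hc c' hc'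
              omega
            have := (ih c' hc'm hc'lev).mp hf
            exact ⟨c', ⟨hc', this⟩, rfl⟩
          · rintro ⟨c', ⟨hc', hsupp⟩, rfl⟩
            have hc'm : c' ∈ H.concepts := H.children_mem c hc c' hc'
            have hc'lev : H.level c' = ℓ := by
              have := H.children_level c hc c' hc'
              omega
            refine ⟨⟨?_, (ih c' hc'm hc'lev).mpr hsupp⟩, c, hc, c', hc', rfl, rfl⟩
            rw [hrep_layer c' hc'm, hc'lev, hlayer]
        rw [hset, Finset.card_image_of_injOn]
        intro x hx y hy hxy
        exact hrep_inj x (H.children_mem c hc x (Finset.mem_inter.mp hx).1)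
          y (H.children_mem c hc y (Finset.mem_inter.mp hy).1) hxy
      rw [hsum]
      simp only [ConceptHierarchy.suppL, Finset.mem_filter]
      constructor
      · intro h; exact ⟨hc, hlev, h⟩
      · rintro ⟨_, _, h⟩; exact h
  intro c hc
  rw [main (H.level c) c hc rfl]
  constructor
  · intro h
    exact Set.mem_iUnion.mpr ⟨H.level c, h⟩
  · intro h
    obtain ⟨ℓ, hℓ⟩ := Set.mem_iUnion.mp h
    have := (hsuppL_level ℓ c hℓ).2
    rwa [this]
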